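/- arXiv:2503.11359 — 2 statements merged into one kernel-verified Lean document; each statement's English description precedes it below -/
import Mathlib

section
/- Suppose that for every gear j ∈ {1,…,6} and every v ∈ Ω(j) there exist u₁ ∈ [T_min, T_max] and u₂ ∈ [F_b,min, F_b,max] with u₁·z(j)·z_f/r − C·v² − u₂ − G = 0. Let x = (p, v) ∈ ℝ² with Φ(v) ≠ ∅ and let j* ∈ Φ(v). Then the fixed-gear feasible set for the constant gear schedule j(i) = j* (i = 0,…,N−1) with initial state x is nonempty; in particular, it contains a trajectory with constant velocity, x(i) = (p + i·v·Δt, v) for i = 0,…,N, and constant inputs (u₁(i), u₂(i)) = (u₁, u₂) for i = 0,…,N−1, where u₁, u₂ satisfy the bounds and the force-balance equation above for the gear j*. -/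
/-- Vehicle parameters. -/
structure VehicleParams where
  m : ℝ        -- mass
  C : ℝ        -- wind drag coefficient
  G : ℝ        -- constant road friction force
  r : ℝ        -- wheel radius
  zf : ℝ       -- final drive ratio
  Δt : ℝ       -- time step
  z : ℤ → ℝ    -- gear ratios (used on gears 1,…,6)
  ωmin : ℝ     -- engine speed lower bound
  ωmax : ℝ     -- engine speed upper bound
  Tmin : ℝ     -- torque lower bound
  Tmax : ℝ     -- torque upper bound
  Fbmin : ℝ    -- brake force lower bound
  Fbmax : ℝ    -- brake force upper bound

/-- Engine speed ω(v, j) = 30·v·z(j)·z_f/(r·π). -/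
noncomputable def engSpeed (P : VehicleParams) (v : ℝ) (j : ℤ) : ℝ :=
  30 * v * P.z j * P.zf / (P.r * Real.pi)

/-- Feasible gear set Φ(v) = {j ∈ {1,…,6} : ω_min ≤ ω(v, j) ≤ ω_max}. -/
noncomputable def Phi (P : VehicleParams) (v : ℝ) : Set ℤ :=
  {j | 1 ≤ j ∧ j ≤ 6 ∧ P.ωmin ≤ engSpeed P v j ∧ engSpeed P v j ≤ P.ωmax}

/-- Ω(j) = {v ∈ ℝ : j ∈ Φ(v)}. -/
noncomputable def OmegaSet (P : VehicleParams) (j : ℤ) : Set ℝ := {v | j ∈ Phi P v}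

/-- Discrete-time dynamics
`f((p, v), (u₁, u₂, j)) = (p + v·Δt, v + (Δt/m)·(u₁·z(j)·z_f/r − C·v² − u₂ − G))`. -/
noncomputable def step (P : VehicleParams) (x : ℝ × ℝ) (u1 u2 : ℝ) (j : ℤ) : ℝ × ℝ :=
  (x.1 + x.2 * P.Δt,
   x.2 + (P.Δt / P.m) * (u1 * P.z j * P.zf / P.r - P.C * x.2 ^ 2 - u2 - P.G))

/-- Membership in the fixed-gear feasible set for gear schedule `jsch ∈ {1,…,6}^N`,
initial state `x0`, state sequence `x(0),…,x(N)` and inputs `(u1(i), u2(i))`, `i = 0,…,N−1`. -/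
noncomputable def Feasible (P : VehicleParams) (N : ℕ) (amax ΔTmax : ℝ) (jsch : ℕ → ℤ)
    (x0 : ℝ × ℝ) (x : ℕ → ℝ × ℝ) (u1 u2 : ℕ → ℝ) : Prop :=
  x 0 = x0 ∧
  (∀ i < N, 1 ≤ jsch i ∧ jsch i ≤ 6) ∧
  (∀ i < N, x (i + 1) = step P (x i) (u1 i) (u2 i) (jsch i)) ∧
  (∀ i < N, |(x (i + 1)).2 - (x i).2| ≤ amax * P.Δt) ∧
  (∀ i, i + 1 < N → |u1 (i + 1) - u1 i| ≤ ΔTmax * P.Δt) ∧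
  (∀ i, i + 1 < N → |jsch (i + 1) - jsch i| ≤ 1) ∧
  (∀ i < N,
    P.Tmin ≤ u1 i ∧ u1 i ≤ P.Tmax ∧
    P.Fbmin ≤ u2 i ∧ u2 i ≤ P.Fbmax ∧
    P.ωmin ≤ engSpeed P (x i).2 (jsch i) ∧ engSpeed P (x i).2 (jsch i) ≤ P.ωmax ∧
    P.ωmin ≤ engSpeed P (x (i + 1)).2 (jsch i) ∧ engSpeed P (x (i + 1)).2 (jsch i) ≤ P.ωmax)

/-- If for every gear `j ∈ {1,…,6}` and every `v ∈ Ω(j)` there are in-bounds inputs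
balancing the forces, then for any state `(p, v)` with `Φ(v) ≠ ∅` and any `j* ∈ Φ(v)`,
the fixed-gear feasible set for the constant gear schedule `j*` is nonempty: it contains
the constant-velocity trajectory `x(i) = (p + i·v·Δt, v)` with constant inputs. -/
theorem constant_gear_schedule_feasible
    (P : VehicleParams)
    (hm : 0 < P.m) (hC : 0 < P.C) (hr : 0 < P.r) (hzf : 0 < P.zf) (hΔt : 0 < P.Δt)
    (hz6 : 0 < P.z 6) (hzmono : ∀ j : ℤ, 1 ≤ j → j ≤ 5 → P.z (j + 1) ≤ P.z j)
    (hωmin : 0 < P.ωmin) (hωle : P.ωmin ≤ P.ωmax)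
    (hT : P.Tmin ≤ P.Tmax) (hFb : P.Fbmin ≤ P.Fbmax)
    (N : ℕ) (hN : 1 ≤ N) (amax ΔTmax : ℝ) (hamax : 0 < amax) (hΔTmax : 0 ≤ ΔTmax)
    (hassum : ∀ j : ℤ, 1 ≤ j → j ≤ 6 → ∀ v : ℝ, v ∈ OmegaSet P j →
      ∃ u1 u2 : ℝ, P.Tmin ≤ u1 ∧ u1 ≤ P.Tmax ∧ P.Fbmin ≤ u2 ∧ u2 ≤ P.Fbmax ∧
        u1 * P.z j * P.zf / P.r - P.C * v ^ 2 - u2 - P.G = 0)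
    (p v : ℝ) (hΦ : (Phi P v).Nonempty) (jstar : ℤ) (hjstar : jstar ∈ Phi P v) :
    ∃ u1 u2 : ℝ,
      (P.Tmin ≤ u1 ∧ u1 ≤ P.Tmax ∧ P.Fbmin ≤ u2 ∧ u2 ≤ P.Fbmax ∧
        u1 * P.z jstar * P.zf / P.r - P.C * v ^ 2 - u2 - P.G = 0) ∧
      Feasible P N amax ΔTmax (fun _ => jstar) (p, v)
        (fun i => (p + (i : ℝ) * v * P.Δt, v)) (fun _ => u1) (fun _ => u2) := by
  obtain ⟨hj1, hj6, hω1, hω2⟩ := hjstar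
  obtain ⟨u1, u2, h1, h2, h3, h4, h5⟩ := hassum jstar hj1 hj6 v ⟨hj1, hj6, hω1, hω2⟩
  refine ⟨u1, u2, ⟨h1, h2, h3, h4, h5⟩, ?_, ?_, ?_, ?_, ?_, ?_, ?_⟩
  · simp
  · intro i _; exact ⟨hj1, hj6⟩
  · intro i _
    simp only [step, h5, mul_zero, add_zero, Prod.mk.injEq]
    constructor
    · push_cast; ring
    · trivial
  · intro i _
    simp only [sub_self, abs_zero]
    positivity
  · intro i _
    simp only [sub_self, abs_zero]
    positivity
  · intro i _; simp
  · intro i _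
    exact ⟨h1, h2, h3, h4, hω1, hω2, hω1, hω2⟩
end

section
/- Suppose that for every gear j ∈ {1,…,6} and every v ∈ Ω(j) there exist u₁ ∈ [T_min, T_max] and u₂ ∈ [F_b,min, F_b,max] with u₁·z(j)·z_f/r − C·v² − u₂ − G = 0. Let 𝐣 = (j(0),…,j(N−1)) be any gear schedule and let (x(0),…,x(N)), (u₁(i), u₂(i))_{i=0,…,N−1} belong to the fixed-gear feasible set for 𝐣 with initial state x(0) = x. Then the successor state x⁺ = f(x, (u₁(0), u₂(0), j(0))) satisfies Φ(x⁺₂) ≠ ∅, and for every j⁺ ∈ Φ(x⁺₂) the fixed-gear feasible set with initial state x⁺ and constant gear schedule (j⁺,…,j⁺) of length N is nonempty (recursive feasibility under the nominal dynamics). -/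
/-- Recursive feasibility under the nominal dynamics: if the force-balance assumption holds
and `(x(·), u(·))` is feasible for some gear schedule `𝐣` from state `x`, then the successor
state `x⁺ = f(x, (u₁(0), u₂(0), j(0)))` satisfies `Φ(x⁺₂) ≠ ∅`, and for each `j⁺ ∈ Φ(x⁺₂)`
the fixed-gear feasible set from `x⁺` with constant gear schedule `(j⁺,…,j⁺)` is nonempty. -/
theorem recursive_feasibility
    (P : VehicleParams)
    (hm : 0 < P.m) (hC : 0 < P.C) (hr : 0 < P.r) (hzf : 0 < P.zf) (hΔt : 0 < P.Δt)
    (hz6 : 0 < P.z 6) (hzmono : ∀ j : ℤ, 1 ≤ j → j ≤ 5 → P.z (j + 1) ≤ P.z j)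
    (hωmin : 0 < P.ωmin) (hωle : P.ωmin ≤ P.ωmax)
    (hT : P.Tmin ≤ P.Tmax) (hFb : P.Fbmin ≤ P.Fbmax)
    (N : ℕ) (hN : 1 ≤ N) (amax ΔTmax : ℝ) (hamax : 0 < amax) (hΔTmax : 0 ≤ ΔTmax)
    (hassum : ∀ j : ℤ, 1 ≤ j → j ≤ 6 → ∀ v : ℝ, v ∈ OmegaSet P j →
      ∃ u1 u2 : ℝ, P.Tmin ≤ u1 ∧ u1 ≤ P.Tmax ∧ P.Fbmin ≤ u2 ∧ u2 ≤ P.Fbmax ∧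
        u1 * P.z j * P.zf / P.r - P.C * v ^ 2 - u2 - P.G = 0)
    (jsch : ℕ → ℤ) (x0 : ℝ × ℝ) (x : ℕ → ℝ × ℝ) (u1 u2 : ℕ → ℝ)
    (hfeas : Feasible P N amax ΔTmax jsch x0 x u1 u2) :
    (Phi P (step P x0 (u1 0) (u2 0) (jsch 0)).2).Nonempty ∧
    ∀ jplus ∈ Phi P (step P x0 (u1 0) (u2 0) (jsch 0)).2,
      ∃ (x' : ℕ → ℝ × ℝ) (u1' u2' : ℕ → ℝ),
        Feasible P N amax ΔTmax (fun _ => jplus)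
          (step P x0 (u1 0) (u2 0) (jsch 0)) x' u1' u2' := by
  obtain ⟨hx0, hgear, hdyn, hacc, hu1r, hjr, hbox⟩ := hfeas
  have h0N : 0 < N := hN
  have hx1 : x 1 = step P x0 (u1 0) (u2 0) (jsch 0) := by
    rw [hdyn 0 h0N, hx0]
  obtain ⟨hT1, hT2, hF1, hF2, hω1, hω2, hω3, hω4⟩ := hbox 0 h0N
  obtain ⟨hg1, hg2⟩ := hgear 0 h0N
  constructor
  · exact ⟨jsch 0, by rw [← hx1]; exact ⟨hg1, hg2, hω3, hω4⟩⟩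
  · intro jplus hjp
    obtain ⟨hjp1, hjp2, hjpω1, hjpω2⟩ := hjp
    set v := (step P x0 (u1 0) (u2 0) (jsch 0)).2 with hv
    obtain ⟨a, b, ha1, ha2, hb1, hb2, hbal⟩ :=
      hassum jplus hjp1 hjp2 v ⟨hjp1, hjp2, hjpω1, hjpω2⟩
    -- constant-velocity trajectory
    refine ⟨fun n => ((step P x0 (u1 0) (u2 0) (jsch 0)).1 + n * v * P.Δt, v),
      fun _ => a, fun _ => b, ?_⟩
    have hstep : ∀ n : ℕ,
        step P (((step P x0 (u1 0) (u2 0) (jsch 0)).1 + n * v * P.Δt, v)) a b jplus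
        = ((step P x0 (u1 0) (u2 0) (jsch 0)).1 + (n + 1 : ℕ) * v * P.Δt, v) := by
      intro n
      simp only [step, hbal, mul_zero, add_zero, Prod.mk.injEq]
      refine ⟨?_, trivial⟩
      push_cast; ring
    refine ⟨by simp [hv], fun i _ => ⟨hjp1, hjp2⟩, fun i _ => (hstep i).symm,
      fun i _ => ?_, fun i _ => by simpa using mul_nonneg hΔTmax hΔt.le,
      fun i _ => by simp, fun i _ => ⟨ha1, ha2, hb1, hb2, hjpω1, hjpω2, hjpω1, hjpω2⟩⟩
    simp only [sub_self, abs_zero]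
    exact mul_nonneg hamax.le hΔt.le
end
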